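/- Let T be a tournament and R ⊆ V(T). If the directed domination graph of T[R] contains a directed cycle C with R \ V(C) ≠ ∅, then R is not a minimal τ-retentive set of T. -/

import Mathlib

variable {V : Type}

/-- Inneighbors of `v` inside the subtournament on `s` (excluding `v` itself). -/
def inn [DecidableEq V] (r : V → V → Prop) [DecidableRel r] (s : Finset V) (v : V) :
    Finset V :=
  (s.filter fun u => r u v).erase v

lemma inn_card_lt [DecidableEq V] (r : V → V → Prop) [DecidableRel r]
    (s : Finset V) (v : V) (hv : v ∈ s) : (inn r s v).card < s.card := by
  have h1 : inn r s v ⊆ s.erase v := by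
    intro x hx
    rcases Finset.mem_erase.mp hx with ⟨hxv, hx2⟩
    exact Finset.mem_erase.mpr ⟨hxv, (Finset.mem_filter.mp hx2).1⟩
  calc (inn r s v).card ≤ (s.erase v).card := Finset.card_le_card h1
    _ < s.card := Finset.card_erase_lt_of_mem hv

/-- The tournament equilibrium set of the subtournament of `r` on `s`:
the union of all minimal τ-retentive sets. -/
def tau [DecidableEq V] (r : V → V → Prop) [DecidableRel r] (s : Finset V) : Set V :=
  {x | ∃ A : Finset V, x ∈ A ∧ A ⊆ s ∧ A.Nonempty ∧
    (∀ v, v ∈ s → v ∈ A → ((inn r s v).Nonempty → tau r (inn r s v) ⊆ ↑A)) ∧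
    ∀ B : Finset V, B ⊆ s → B ⊂ A →
      ¬ (B.Nonempty ∧
        ∀ v, v ∈ s → v ∈ B → ((inn r s v).Nonempty → tau r (inn r s v) ⊆ ↑B))}
termination_by s.card
decreasing_by
  all_goals exact inn_card_lt r s v (by assumption)

/-- `A` is a τ-retentive set of the tournament on `s`. -/
def Retentive [DecidableEq V] (r : V → V → Prop) [DecidableRel r] (s A : Finset V) : Prop :=
  A ⊆ s ∧ A.Nonempty ∧ ∀ v ∈ A, (inn r s v).Nonempty → tau r (inn r s v) ⊆ ↑A

/-- `A` is a minimal τ-retentive set of the tournament on `s`. -/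
def MinRetentive [DecidableEq V] (r : V → V → Prop) [DecidableRel r] (s A : Finset V) : Prop :=
  Retentive r s A ∧ ∀ B, Retentive r s B → B ⊆ A → B = A

/-- `r` is a tournament on the vertex set `s`. -/
def IsTournament (r : V → V → Prop) (s : Finset V) : Prop :=
  (∀ v ∈ s, ¬ r v v) ∧ ∀ u ∈ s, ∀ v ∈ s, u ≠ v → (r u v ↔ ¬ r v u)

/-- `u` is the captain of `v` in the subtournament on `s`:
`u` dominates `v` and all other inneighbors of `v`. -/
def IsCaptain (r : V → V → Prop) (s : Finset V) (u v : V) : Prop :=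
  u ∈ s ∧ v ∈ s ∧ r u v ∧ ∀ w ∈ s, w ≠ u → r w v → r u w

/-- The (undirected) domination graph of the subtournament on `s`. -/
def domGraph (r : V → V → Prop) (s : Finset V) : SimpleGraph V where
  Adj u v := (IsCaptain r s u v ∨ IsCaptain r s v u) ∧ u ≠ v
  symm := by
    constructor
    intro u v h
    exact ⟨h.1.symm, h.2.symm⟩
  loopless := by
    constructor
    intro u h
    exact h.2 rfl


def Cond [DecidableEq V] (r : V → V → Prop) [DecidableRel r] (t A : Finset V) : Prop :=
  ∀ v, v ∈ t → v ∈ A → ((inn r t v).Nonempty → tau r (inn r t v) ⊆ ↑A)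

lemma mem_tau_iff [DecidableEq V] (r : V → V → Prop) [DecidableRel r] (t : Finset V) (x : V) :
    x ∈ tau r t ↔ ∃ A : Finset V, x ∈ A ∧ A ⊆ t ∧ A.Nonempty ∧ Cond r t A ∧
      ∀ B : Finset V, B ⊆ t → B ⊂ A → ¬ (B.Nonempty ∧ Cond r t B) := by
  rw [tau]; rfl

lemma inn_subset [DecidableEq V] (r : V → V → Prop) [DecidableRel r] (t : Finset V) (v : V) :
    inn r t v ⊆ t := fun y hy => (Finset.mem_filter.mp (Finset.mem_erase.mp hy).2).1

lemma tau_subset [DecidableEq V] (r : V → V → Prop) [DecidableRel r] (t : Finset V) :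
    tau r t ⊆ ↑t := by
  intro x hx
  obtain ⟨A, hxA, hAt, -⟩ := (mem_tau_iff r t x).mp hx
  exact hAt hxA

lemma tau_nonempty [DecidableEq V] (r : V → V → Prop) [DecidableRel r] (t : Finset V)
    (ht : t.Nonempty) : (tau r t).Nonempty := by
  have key : ∀ A : Finset V, A ⊆ t → A.Nonempty → Cond r t A → (tau r t).Nonempty := by
    intro A
    induction A using Finset.strongInduction with
    | _ A ih =>
      intro hAt hAne hC
      by_cases h : ∃ B : Finset V, B ⊆ t ∧ B ⊂ A ∧ B.Nonempty ∧ Cond r t B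
      · obtain ⟨B, hBt, hBA, hBne, hBC⟩ := h
        exact ih B hBA hBt hBne hBC
      · obtain ⟨x, hx⟩ := hAne
        exact ⟨x, (mem_tau_iff r t x).mpr ⟨A, hx, hAt, ⟨x, hx⟩, hC,
          fun B hBt hBA hc => h ⟨B, hBt, hBA, hc.1, hc.2⟩⟩⟩
  refine key t subset_rfl ht ?_
  intro v _ _ _ x hx
  exact Finset.mem_coe.mpr (inn_subset r t v (Finset.mem_coe.mp (tau_subset r _ hx)))

lemma captain_mem [DecidableEq V] (r : V → V → Prop) [DecidableRel r] (u : V) :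
    ∀ t A : Finset V, A ⊆ t → Cond r t A → u ∈ t →
      (∀ w ∈ A, w ≠ u → r u w) → A.Nonempty → u ∈ A := by
  intro t
  induction t using Finset.strongInduction with
  | _ t ih =>
    intro A hAt hC hu hdom hAne
    obtain ⟨v', hv'⟩ := hAne
    by_cases hvu : v' = u
    · exact hvu ▸ hv'
    · have hru : r u v' := hdom v' hv' hvu
      have hut' : u ∈ inn r t v' :=
        Finset.mem_erase.mpr ⟨fun h => hvu h.symm, Finset.mem_filter.mpr ⟨hu, hru⟩⟩
      have hne' : (inn r t v').Nonempty := ⟨u, hut'⟩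
      have hsub : tau r (inn r t v') ⊆ ↑A := hC v' (hAt hv') hv' hne'
      obtain ⟨x, hx⟩ := tau_nonempty r _ hne'
      obtain ⟨A', hxA', hA't', hA'ne, hA'C, hA'min⟩ := (mem_tau_iff r _ x).mp hx
      have hA'A : ∀ y ∈ A', y ∈ A := fun y hy =>
        Finset.mem_coe.mp (hsub ((mem_tau_iff r _ y).mpr ⟨A', hy, hA't', hA'ne, hA'C, hA'min⟩))
      have hss : inn r t v' ⊂ t := by
        rw [Finset.ssubset_def]
        refine ⟨inn_subset r t v', fun hsup => ?_⟩
        exact (Finset.mem_erase.mp (hsup (hAt hv'))).1 rfl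
      exact hA'A u (ih _ hss A' hA't' hA'C hut'
        (fun w hw hwu => hdom w (hA'A w hw) hwu) hA'ne)

theorem stmt11 [DecidableEq V] (r : V → V → Prop) [DecidableRel r] (s : Finset V)
    (hT : IsTournament r s) (R : Finset V) (hRs : R ⊆ s)
    (n : ℕ) (hn : 0 < n) (c : Fin n → V) (hinj : Function.Injective c)
    (hmem : ∀ i, c i ∈ R)
    (hcyc : ∀ i : Fin n, IsCaptain r R (c i) (c ⟨(i.val + 1) % n, Nat.mod_lt _ hn⟩))
    (hrem : ∃ x ∈ R, ∀ i, c i ≠ x) :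
    ¬ MinRetentive r s R := by
  rcases Nat.lt_or_ge 1 n with hn1 | hn1
  swap
  · -- n = 1 : c 0 would be its own captain, contradicting irreflexivity
    intro _
    have h1 : n = 1 := le_antisymm hn1 hn
    subst h1
    have hc := (hcyc ⟨0, hn⟩).2.2.1
    have e : (⟨((⟨0, hn⟩ : Fin 1).val + 1) % 1, Nat.mod_lt _ hn⟩ : Fin 1) = ⟨0, hn⟩ :=
      Subsingleton.elim _ _
    rw [e] at hc
    exact hT.1 _ (hRs (hmem ⟨0, hn⟩)) hc
  intro hMin
  obtain ⟨⟨hRs', hRne, hRret⟩, hMinimal⟩ := hMin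
  set B := Finset.image c Finset.univ with hB
  have hBR : B ⊆ R := by
    intro x hx
    obtain ⟨i, -, rfl⟩ := Finset.mem_image.mp hx
    exact hmem i
  have hBret : Retentive r s B := by
    refine ⟨hBR.trans hRs, ⟨c ⟨0, hn⟩, Finset.mem_image.mpr ⟨_, Finset.mem_univ _, rfl⟩⟩, ?_⟩
    intro v hv hne x hx
    obtain ⟨j, -, rfl⟩ := Finset.mem_image.mp hv
    set i : Fin n := ⟨(j.val + n - 1) % n, Nat.mod_lt _ hn⟩ with hi
    have hij : ((i.val + 1) % n : ℕ) = j.val := by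
      show ((j.val + n - 1) % n + 1) % n = j.val
      rw [Nat.mod_add_mod]
      have h2 : j.val + n - 1 + 1 = j.val + n := by omega
      rw [h2, Nat.add_mod_right, Nat.mod_eq_of_lt j.isLt]
    have hcap := hcyc i
    rw [show (⟨(i.val + 1) % n, Nat.mod_lt _ hn⟩ : Fin n) = j from Fin.ext hij] at hcap
    obtain ⟨huR, hvR, hruv, hcapdom⟩ := hcap
    have hus : c i ∈ s := hRs huR
    have hvs : c j ∈ s := hRs hvR
    have huv : c i ≠ c j := by
      intro h
      have hij2 : ((j.val + 1) % n : ℕ) = j.val := by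
        have h3 : i = j := hinj h
        rw [h3] at hij
        exact hij
      rcases Nat.lt_or_ge (j.val + 1) n with h3 | h3
      · rw [Nat.mod_eq_of_lt h3] at hij2; omega
      · have h4 : j.val + 1 = n := by omega
        rw [h4, Nat.mod_self] at hij2
        omega
    have htR : tau r (inn r s (c j)) ⊆ ↑R := hRret (c j) hvR hne
    obtain ⟨A, hxA, hAt, hAne, hAC, hAmin⟩ := (mem_tau_iff r _ x).mp hx
    have hAR : ∀ y ∈ A, y ∈ R := fun y hy =>
      Finset.mem_coe.mp (htR ((mem_tau_iff r _ y).mpr ⟨A, hy, hAt, hAne, hAC, hAmin⟩))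
    have hdom2 : ∀ w ∈ A, w ≠ c i → r (c i) w := by
      intro w hw hwu
      have hwt := hAt hw
      obtain ⟨hwv, hwf⟩ := Finset.mem_erase.mp hwt
      obtain ⟨hws, hrwv⟩ := Finset.mem_filter.mp hwf
      exact hcapdom w (hAR w hw) hwu hrwv
    have hut : c i ∈ inn r s (c j) :=
      Finset.mem_erase.mpr ⟨huv, Finset.mem_filter.mpr ⟨hus, hruv⟩⟩
    have huA : c i ∈ A := captain_mem r (c i) (inn r s (c j)) A hAt hAC hut hdom2 hAne
    have hinnu : ¬ (inn r (inn r s (c j)) (c i)).Nonempty := by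
      intro hne2
      have hsub := hAC (c i) hut huA hne2
      obtain ⟨w, hw⟩ := tau_nonempty r _ hne2
      have hwA : w ∈ A := Finset.mem_coe.mp (hsub hw)
      have hwinn : w ∈ inn r (inn r s (c j)) (c i) := Finset.mem_coe.mp (tau_subset r _ hw)
      obtain ⟨hwu, hwf⟩ := Finset.mem_erase.mp hwinn
      obtain ⟨hwt, hrwu⟩ := Finset.mem_filter.mp hwf
      have hws : w ∈ s := inn_subset r s (c j) hwt
      have hruw : r (c i) w := hdom2 w hwA hwu
      exact ((hT.2 (c i) hus w hws (fun h => hwu h.symm)).mp hruw) hrwu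
    have hAu : A = {c i} := by
      by_contra hne3
      have hss : ({c i} : Finset V) ⊂ A :=
        Finset.ssubset_iff_subset_ne.mpr
          ⟨Finset.singleton_subset_iff.mpr huA, fun h => hne3 h.symm⟩
      refine hAmin {c i} (Finset.singleton_subset_iff.mpr hut) hss
        ⟨Finset.singleton_nonempty _, ?_⟩
      intro v' _ hv'2 hne'
      rw [Finset.mem_singleton.mp hv'2] at hne'
      exact absurd hne' hinnu
    have hxu : x = c i := Finset.mem_singleton.mp (hAu ▸ hxA)
    rw [hxu]
    exact Finset.mem_coe.mpr (Finset.mem_image.mpr ⟨i, Finset.mem_univ _, rfl⟩)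
  have hBeq : B = R := hMinimal B hBret hBR
  obtain ⟨y, hyR, hy⟩ := hrem
  rw [← hBeq] at hyR
  obtain ⟨i, -, hci⟩ := Finset.mem_image.mp hyR
  exact hy i hci
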